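/- For every H ∈ (0,1) there exists c > 0 such that for all ε ∈ (0, 1/4]: ∫₀¹ (h/(h+ε))^{H} · (2h·√(log(1/h)))^{−1} dh ≤ c·√(log(1/ε)). -/

import Mathlib

open MeasureTheory intervalIntegral

private lemma deriv_sqrtlog {h : ℝ} (h0 : 0 < h) (h1 : h < 1) :
    HasDerivAt (fun x : ℝ => -Real.sqrt (Real.log (1/x)))
      ((2 * h * Real.sqrt (Real.log (1/h)))⁻¹) h := by
  have hne : h ≠ 0 := ne_of_gt h0
  have hlog : HasDerivAt (fun x : ℝ => Real.log (1/x)) (-h⁻¹) h := by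
    have h2 : HasDerivAt (fun x : ℝ => 1/x) (-(h^2)⁻¹) h := by
      simpa using (hasDerivAt_inv hne)
    have := (Real.hasDerivAt_log (by positivity : (1:ℝ)/h ≠ 0)).comp h h2
    refine this.congr_deriv ?_
    field_simp
  have hupos : 0 < Real.log (1/h) := Real.log_pos (by rw [lt_div_iff₀ h0]; linarith)
  have hsq := (Real.hasDerivAt_sqrt (ne_of_gt hupos)).comp h hlog
  have h3 := hsq.neg
  refine h3.congr_deriv ?_
  have hs : 0 < Real.sqrt (Real.log (1/h)) := Real.sqrt_pos.mpr hupos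
  field_simp

private lemma contAt_inv_sqrtlog {x : ℝ} (hx0 : 0 < x) (hx1 : x < 1) :
    ContinuousAt (fun h : ℝ => (2 * h * Real.sqrt (Real.log (1/h)))⁻¹) x := by
  have hupos : 0 < Real.log (1/x) := Real.log_pos (by rw [lt_div_iff₀ hx0]; linarith)
  have hs : 0 < Real.sqrt (Real.log (1/x)) := Real.sqrt_pos.mpr hupos
  have hc : ContinuousAt (fun h : ℝ => 2 * h * Real.sqrt (Real.log (1/h))) x := by
    apply ContinuousAt.mul
    · exact (continuous_const.mul continuous_id).continuousAt
    · exact (Real.continuous_sqrt.continuousAt).comp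
        ((Real.continuousAt_log (by positivity)).comp
          ((continuousAt_const.div continuousAt_id (ne_of_gt hx0))))
  exact hc.inv₀ (by positivity)

private lemma integral_inv_sqrtlog {a b : ℝ} (ha : 0 < a) (hab : a ≤ b) (hb : b < 1) :
    ∫ h in a..b, (2 * h * Real.sqrt (Real.log (1/h)))⁻¹
      = Real.sqrt (Real.log (1/a)) - Real.sqrt (Real.log (1/b)) := by
  have key : ∀ x ∈ Set.uIcc a b, 0 < x ∧ x < 1 := by
    rw [Set.uIcc_of_le hab]
    exact fun x hx => ⟨lt_of_lt_of_le ha hx.1, lt_of_le_of_lt hx.2 hb⟩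
  have h1 : ∫ h in a..b, (2 * h * Real.sqrt (Real.log (1/h)))⁻¹
      = (-Real.sqrt (Real.log (1/b))) - (-Real.sqrt (Real.log (1/a))) := by
    apply intervalIntegral.integral_eq_sub_of_hasDerivAt
    · exact fun x hx => deriv_sqrtlog (key x hx).1 (key x hx).2
    · apply ContinuousOn.intervalIntegrable
      exact fun x hx => (contAt_inv_sqrtlog (key x hx).1 (key x hx).2).continuousWithinAt
  rw [h1]; ring

private lemma contAt_F {H ε x : ℝ} (hε : 0 < ε) (hx0 : 0 < x) (hx1 : x < 1) :
    ContinuousAt (fun h : ℝ => (h / (h + ε)) ^ H * (2 * h * Real.sqrt (Real.log (1/h)))⁻¹) x := by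
  apply ContinuousAt.mul
  · apply ContinuousAt.rpow_const
    · exact continuousAt_id.div (continuousAt_id.add continuousAt_const) (by positivity)
    · left; positivity
  · exact contAt_inv_sqrtlog hx0 hx1

private lemma F_nonneg {H ε h : ℝ} (hε : 0 < ε) (hh : 0 ≤ h) :
    0 ≤ (h / (h + ε)) ^ H * (2 * h * Real.sqrt (Real.log (1/h)))⁻¹ := by
  have h1 : 0 ≤ h / (h + ε) := div_nonneg hh (by positivity)
  have h2 : 0 ≤ (h / (h + ε)) ^ H := Real.rpow_nonneg h1 H
  have hs : 0 ≤ Real.sqrt (Real.log (1/h)) := Real.sqrt_nonneg _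
  positivity

private lemma ptA {H ε h : ℝ} (hH : 0 < H) (hε : 0 < ε) (hε4 : ε ≤ 1/4)
    (hh : 0 < h) (hhe : h ≤ ε) :
    (h / (h + ε)) ^ H * (2 * h * Real.sqrt (Real.log (1/h)))⁻¹
      ≤ (ε ^ H * (2 * Real.sqrt (Real.log 4)))⁻¹ * h ^ (H - 1) := by
  have h4 : Real.log 4 ≤ Real.log (1/h) := by
    apply Real.log_le_log (by norm_num)
    rw [le_div_iff₀ hh]; linarith
  have hl4 : (0:ℝ) < Real.log 4 := Real.log_pos (by norm_num)
  have hs4 : 0 < Real.sqrt (Real.log 4) := Real.sqrt_pos.mpr hl4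
  have b1 : (h / (h + ε)) ^ H ≤ (h / ε) ^ H := by
    apply Real.rpow_le_rpow (div_nonneg hh.le (by positivity)) _ hH.le
    gcongr
    linarith
  have b2 : (2 * h * Real.sqrt (Real.log (1/h)))⁻¹ ≤ (2 * h * Real.sqrt (Real.log 4))⁻¹ := by
    apply inv_anti₀ (by positivity)
    gcongr 2 * h * ?_
    exact Real.sqrt_le_sqrt h4
  calc (h / (h + ε)) ^ H * (2 * h * Real.sqrt (Real.log (1/h)))⁻¹
      ≤ (h / ε) ^ H * (2 * h * Real.sqrt (Real.log 4))⁻¹ :=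
        mul_le_mul b1 b2 (by positivity) (Real.rpow_nonneg (div_nonneg hh.le hε.le) H)
    _ = (ε ^ H * (2 * Real.sqrt (Real.log 4)))⁻¹ * h ^ (H - 1) := by
        rw [Real.div_rpow hh.le hε.le, Real.rpow_sub hh, Real.rpow_one]
        have hεH : 0 < ε ^ H := Real.rpow_pos_of_pos hε H
        have hhH : 0 < h ^ H := Real.rpow_pos_of_pos hh H
        field_simp
        try ring
        try tauto

private lemma ptC {H ε h : ℝ} (hH : 0 < H) (hε : 0 < ε) (hh : (1:ℝ)/2 ≤ h) (hh1 : h ≤ 1) :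
    (h / (h + ε)) ^ H * (2 * h * Real.sqrt (Real.log (1/h)))⁻¹
      ≤ (1 - h) ^ (-(1/2) : ℝ) := by
  have hh0 : 0 < h := by linarith
  have brp : (h / (h + ε)) ^ H ≤ 1 :=
    Real.rpow_le_one (div_nonneg hh0.le (by positivity))
      ((div_le_one (by positivity)).mpr (by linarith)) hH.le
  rcases eq_or_lt_of_le hh1 with rfl | hlt
  · norm_num
  · have h1h : 0 < 1 - h := by linarith
    have hl : 1 - h ≤ Real.log (1/h) := by
      rw [one_div, Real.log_inv]
      linarith [Real.log_le_sub_one_of_pos hh0]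
    have hs : Real.sqrt (1 - h) ≤ Real.sqrt (Real.log (1/h)) := Real.sqrt_le_sqrt hl
    have hsp : 0 < Real.sqrt (1 - h) := Real.sqrt_pos.mpr h1h
    have key : Real.sqrt (1 - h) ≤ 2 * h * Real.sqrt (Real.log (1/h)) := by
      calc Real.sqrt (1 - h) ≤ Real.sqrt (Real.log (1/h)) := hs
        _ ≤ 2 * h * Real.sqrt (Real.log (1/h)) := by
            nlinarith [Real.sqrt_nonneg (Real.log (1/h))]
    have b2 : (2 * h * Real.sqrt (Real.log (1/h)))⁻¹ ≤ (Real.sqrt (1 - h))⁻¹ :=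
      inv_anti₀ hsp key
    have hfin : (h / (h + ε)) ^ H * (2 * h * Real.sqrt (Real.log (1/h)))⁻¹
        ≤ 1 * (Real.sqrt (1 - h))⁻¹ :=
      mul_le_mul brp b2 (by positivity) (by norm_num)
    rw [one_mul] at hfin
    refine hfin.trans (le_of_eq ?_)
    rw [Real.rpow_neg h1h.le, ← Real.sqrt_eq_rpow]

private lemma intg2 : IntervalIntegrable (fun h : ℝ => (1 - h) ^ (-(1/2) : ℝ)) volume (1/2) 1 := by
  have := (intervalIntegral.intervalIntegrable_rpow'
    (show (-1:ℝ) < -(1/2) by norm_num) (a := 0) (b := 1/2)).comp_sub_left 1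
  norm_num at this
  exact this.symm

private lemma intg2_val : ∫ h in (1/2:ℝ)..1, (1 - h) ^ (-(1/2) : ℝ) ≤ Real.sqrt 2 := by
  rw [intervalIntegral.integral_comp_sub_left (fun x : ℝ => x ^ (-(1/2):ℝ)) 1]
  norm_num
  rw [integral_rpow (Or.inl (by norm_num))]
  norm_num
  rw [show ((1:ℝ)/2) ^ ((1:ℝ)/2) = Real.sqrt (1/2) from (Real.sqrt_eq_rpow _).symm]
  have h2 : Real.sqrt 2 * Real.sqrt 2 = 2 := Real.mul_self_sqrt (by norm_num)
  have hhalf : Real.sqrt (1/2) * Real.sqrt 2 = 1 := by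
    rw [← Real.sqrt_mul (by norm_num)]
    norm_num
  nlinarith [Real.sqrt_nonneg 2, Real.sqrt_nonneg (1/2:ℝ)]

/-- second assertion of Lemma 1, entropy integral bound: for `H ∈ (0,1)`
there is `c > 0` with `∫₀¹ (h/(h+ε))^H (2h√(log(1/h)))⁻¹ dh ≤ c √(log(1/ε))` for all
`ε ∈ (0, 1/4]`. -/
theorem statement16 (H : ℝ) (hH : H ∈ Set.Ioo (0:ℝ) 1) :
    ∃ c > (0:ℝ), ∀ ε : ℝ, ε ∈ Set.Ioc (0:ℝ) (1/4) →
      (∫ h in (0:ℝ)..1,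
          (h / (h + ε)) ^ H * (2 * h * Real.sqrt (Real.log (1/h)))⁻¹)
        ≤ c * Real.sqrt (Real.log (1/ε)) := by
  obtain ⟨hH0, hH1⟩ := hH
  have hl4 : (0:ℝ) < Real.log 4 := Real.log_pos (by norm_num)
  have hs4 : 0 < Real.sqrt (Real.log 4) := Real.sqrt_pos.mpr hl4
  set K : ℝ := (2 * H * Real.sqrt (Real.log 4))⁻¹ + Real.sqrt 2 with hK
  have hs2 : (0:ℝ) < Real.sqrt 2 := Real.sqrt_pos.mpr (by norm_num)
  have hKpos : 0 < K := by positivity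
  refine ⟨1 + K / Real.sqrt (Real.log 4), by positivity, ?_⟩
  rintro ε ⟨hε0, hε4⟩
  set F : ℝ → ℝ := fun h => (h / (h + ε)) ^ H * (2 * h * Real.sqrt (Real.log (1/h)))⁻¹ with hFdef
  have hε2 : ε ≤ 1/2 := by linarith
  have hε1 : ε < 1 := by linarith
  have hLlog : Real.log 4 ≤ Real.log (1/ε) := by
    apply Real.log_le_log (by norm_num)
    rw [le_div_iff₀ hε0]; linarith
  have hL : Real.sqrt (Real.log 4) ≤ Real.sqrt (Real.log (1/ε)) := Real.sqrt_le_sqrt hLlog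
  -- the dominating function on (0, ε]
  set g1 : ℝ → ℝ := fun h => (ε ^ H * (2 * Real.sqrt (Real.log 4)))⁻¹ * h ^ (H - 1) with hg1
  have intg1 : IntervalIntegrable g1 volume 0 ε :=
    (intervalIntegral.intervalIntegrable_rpow' (by linarith)).const_mul _
  -- integrability of F on [0, ε]
  have intFA : IntervalIntegrable F volume 0 ε := by
    rw [intervalIntegrable_iff_integrableOn_Ioc_of_le hε0.le]
    apply Integrable.mono'
      ((intervalIntegrable_iff_integrableOn_Ioc_of_le hε0.le).mp intg1)
    · apply ContinuousOn.aestronglyMeasurable _ measurableSet_Ioc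
      exact fun x hx =>
        (contAt_F hε0 hx.1 (lt_of_le_of_lt hx.2 hε1)).continuousWithinAt
    · refine (ae_restrict_iff' measurableSet_Ioc).mpr (ae_of_all _ fun h hh => ?_)
      rw [Real.norm_of_nonneg (F_nonneg hε0 hh.1.le)]
      exact ptA hH0 hε0 hε4 hh.1 hh.2
  -- integrability of F on [ε, 1/2] and g on [ε, 1/2]
  have intFB : IntervalIntegrable F volume ε (1/2) := by
    apply ContinuousOn.intervalIntegrable
    rw [Set.uIcc_of_le hε2]
    exact fun x hx => (contAt_F hε0 (lt_of_lt_of_le hε0 hx.1)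
      (lt_of_le_of_lt hx.2 (by norm_num))).continuousWithinAt
  have intGB : IntervalIntegrable
      (fun h : ℝ => (2 * h * Real.sqrt (Real.log (1/h)))⁻¹) volume ε (1/2) := by
    apply ContinuousOn.intervalIntegrable
    rw [Set.uIcc_of_le hε2]
    exact fun x hx => (contAt_inv_sqrtlog (lt_of_lt_of_le hε0 hx.1)
      (lt_of_le_of_lt hx.2 (by norm_num))).continuousWithinAt
  -- integrability of F on [1/2, 1]
  have intFC : IntervalIntegrable F volume (1/2) 1 := by
    rw [intervalIntegrable_iff_integrableOn_Ioo_of_le (by norm_num)]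
    apply Integrable.mono'
      ((intervalIntegrable_iff_integrableOn_Ioo_of_le (by norm_num)).mp intg2)
    · apply ContinuousOn.aestronglyMeasurable _ measurableSet_Ioo
      exact fun x hx => (contAt_F hε0 (by linarith [hx.1]) hx.2).continuousWithinAt
    · refine (ae_restrict_iff' measurableSet_Ioo).mpr (ae_of_all _ fun h hh => ?_)
      rw [Real.norm_of_nonneg (F_nonneg hε0 (by linarith [hh.1]))]
      exact ptC hH0 hε0 hh.1.le hh.2.le
  -- bound A
  have boundA : (∫ h in (0:ℝ)..ε, F h) ≤ (2 * H * Real.sqrt (Real.log 4))⁻¹ := by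
    have m : (∫ h in (0:ℝ)..ε, F h) ≤ ∫ h in (0:ℝ)..ε, g1 h := by
      apply intervalIntegral.integral_mono_on hε0.le intFA intg1
      intro x hx
      rcases eq_or_lt_of_le hx.1 with rfl | hx0
      · simp only [hFdef, hg1]
        rw [zero_div, Real.zero_rpow hH0.ne', Real.zero_rpow (by linarith : H - 1 ≠ 0)]
        simp
      · exact ptA hH0 hε0 hε4 hx0 hx.2
    refine m.trans (le_of_eq ?_)
    simp only [hg1]
    rw [intervalIntegral.integral_const_mul, integral_rpow (Or.inl (by linarith))]
    have hHe : H - 1 + 1 = H := by ring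
    rw [hHe, Real.zero_rpow hH0.ne']
    have hεH : 0 < ε ^ H := Real.rpow_pos_of_pos hε0 H
    field_simp
    ring
  -- bound B
  have boundB : (∫ h in ε..(1/2:ℝ), F h) ≤ Real.sqrt (Real.log (1/ε)) := by
    have m : (∫ h in ε..(1/2:ℝ), F h)
        ≤ ∫ h in ε..(1/2:ℝ), (2 * h * Real.sqrt (Real.log (1/h)))⁻¹ := by
      apply intervalIntegral.integral_mono_on hε2 intFB intGB
      intro x hx
      have hx0 : 0 < x := lt_of_lt_of_le hε0 hx.1
      have hx1 : x < 1 := lt_of_le_of_lt hx.2 (by norm_num)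
      have brp : (x / (x + ε)) ^ H ≤ 1 :=
        Real.rpow_le_one (div_nonneg hx0.le (by positivity))
          ((div_le_one (by positivity)).mpr (by linarith)) hH0.le
      have hinv : 0 ≤ (2 * x * Real.sqrt (Real.log (1/x)))⁻¹ := by positivity
      calc F x ≤ 1 * (2 * x * Real.sqrt (Real.log (1/x)))⁻¹ :=
            mul_le_mul brp le_rfl hinv (by norm_num)
        _ = _ := one_mul _
    rw [integral_inv_sqrtlog hε0 hε2 (by norm_num)] at m
    have : 0 ≤ Real.sqrt (Real.log (1/(1/2:ℝ))) := Real.sqrt_nonneg _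
    linarith
  -- bound C
  have boundC : (∫ h in (1/2:ℝ)..1, F h) ≤ Real.sqrt 2 := by
    have m : (∫ h in (1/2:ℝ)..1, F h) ≤ ∫ h in (1/2:ℝ)..1, (1 - h) ^ (-(1/2) : ℝ) := by
      apply intervalIntegral.integral_mono_on (by norm_num) intFC intg2
      exact fun x hx => ptC hH0 hε0 hx.1 hx.2
    exact m.trans intg2_val
  -- splitting
  have split : (∫ h in (0:ℝ)..1, F h)
      = (∫ h in (0:ℝ)..ε, F h) + (∫ h in ε..(1/2:ℝ), F h) + (∫ h in (1/2:ℝ)..1, F h) := by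
    rw [intervalIntegral.integral_add_adjacent_intervals intFA intFB,
      intervalIntegral.integral_add_adjacent_intervals (intFA.trans intFB) intFC]
  -- conclusion
  have hKL : K ≤ K / Real.sqrt (Real.log 4) * Real.sqrt (Real.log (1/ε)) := by
    have hd : 0 ≤ K / Real.sqrt (Real.log 4) := by positivity
    have h1 : K = K / Real.sqrt (Real.log 4) * Real.sqrt (Real.log 4) :=
      (div_mul_cancel₀ K hs4.ne').symm
    calc K = K / Real.sqrt (Real.log 4) * Real.sqrt (Real.log 4) := h1
      _ ≤ K / Real.sqrt (Real.log 4) * Real.sqrt (Real.log (1/ε)) :=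
        mul_le_mul_of_nonneg_left hL hd
  calc (∫ h in (0:ℝ)..1, F h)
      = (∫ h in (0:ℝ)..ε, F h) + (∫ h in ε..(1/2:ℝ), F h) + (∫ h in (1/2:ℝ)..1, F h) := split
    _ ≤ (2 * H * Real.sqrt (Real.log 4))⁻¹ + Real.sqrt (Real.log (1/ε)) + Real.sqrt 2 := by
        gcongr
    _ = Real.sqrt (Real.log (1/ε)) + K := by rw [hK]; ring
    _ ≤ Real.sqrt (Real.log (1/ε))
        + K / Real.sqrt (Real.log 4) * Real.sqrt (Real.log (1/ε)) := by linarith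
    _ = (1 + K / Real.sqrt (Real.log 4)) * Real.sqrt (Real.log (1/ε)) := by ring
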